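/- (Information decomposition of the adversarial loss, Lemma 4.2, first part.) Let K, X, B, Z be nonempty finite types, let p be a pmf on K × X with K-marginal p_K, let f : K → B be a function, and let q be a kernel from X to Z. Define the pmf s on K × X × B × Z by s(k,x,β,z) = p(k,x)·q(z|x) if β = f(k) and 0 otherwise, and let s_{KZ} denote its (K,Z)-marginal. Then the supremum, over all kernels D from Z to K with D(k|z) > 0 whenever s_{KZ}(k,z) > 0, of ∑_{k,z} s_{KZ}(k,z) log D(k|z) equals I_s(Z;B) + I_s(Z;K|B) − H(p_K), where the mutual information terms are computed from the corresponding marginals of s; the supremum is attained at the posterior D(k|z) = s_{KZ}(k,z)/(∑_{k'} s_{KZ}(k',z)). -/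

import Mathlib

lemma gibbs_ineq {K Z : Type*} [Fintype K] [Fintype Z]
    (w : K → Z → ℝ) (hw0 : ∀ k z, 0 ≤ w k z) (hw1 : ∑ k, ∑ z, w k z = 1)
    (D : Z → K → ℝ) (hD0 : ∀ z k, 0 ≤ D z k) (hD1 : ∀ z, ∑ k, D z k = 1)
    (hDpos : ∀ k z, 0 < w k z → 0 < D z k) :
    ∑ k, ∑ z, w k z * Real.log (D z k)
      ≤ ∑ k, ∑ z, w k z * Real.log (w k z / ∑ k', w k' z) := by
  have hsZ0 : ∀ z, 0 ≤ ∑ k', w k' z := fun z =>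
    Finset.sum_nonneg fun k _ => hw0 k z
  have key : ∀ k z, w k z * Real.log (D z k)
      ≤ w k z * Real.log (w k z / ∑ k', w k' z) + (D z k * (∑ k', w k' z) - w k z) := by
    intro k z
    rcases (hw0 k z).lt_or_eq with hw | hw
    · have hsZ : 0 < ∑ k', w k' z :=
        lt_of_lt_of_le hw (Finset.single_le_sum (fun k' _ => hw0 k' z) (Finset.mem_univ k))
      have hD : 0 < D z k := hDpos k z hw
      have h1 : Real.log (D z k * (∑ k', w k' z) / w k z)
          ≤ D z k * (∑ k', w k' z) / w k z - 1 :=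
        Real.log_le_sub_one_of_pos (by positivity)
      rw [Real.log_div (by positivity) hw.ne', Real.log_mul hD.ne' hsZ.ne'] at h1
      rw [Real.log_div hw.ne' hsZ.ne']
      have h2 : w k z * (D z k * (∑ k', w k' z) / w k z - 1)
          = D z k * (∑ k', w k' z) - w k z := by field_simp
      nlinarith [mul_le_mul_of_nonneg_left h1 (hw0 k z)]
    · rw [← hw]
      simp only [zero_mul, zero_add, sub_zero]
      exact mul_nonneg (hD0 z k) (hsZ0 z)
  calc ∑ k, ∑ z, w k z * Real.log (D z k)
      ≤ ∑ k, ∑ z, (w k z * Real.log (w k z / ∑ k', w k' z)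
          + (D z k * (∑ k', w k' z) - w k z)) := by
        apply Finset.sum_le_sum; intro k _; apply Finset.sum_le_sum; intro z _; exact key k z
    _ = ∑ k, ∑ z, w k z * Real.log (w k z / ∑ k', w k' z) := by
        simp only [Finset.sum_add_distrib]
        have h3 : ∑ k, ∑ z, (D z k * (∑ k', w k' z) - w k z) = 0 := by
          simp only [Finset.sum_sub_distrib]
          have h4 : ∑ k, ∑ z, D z k * (∑ k', w k' z) = 1 := by
            rw [Finset.sum_comm]
            have h5 : ∀ z, ∑ k, D z k * (∑ k', w k' z) = ∑ k', w k' z := by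
              intro z; rw [← Finset.sum_mul, hD1 z, one_mul]
            rw [Finset.sum_congr rfl fun z _ => h5 z, Finset.sum_comm, hw1]
          rw [h4, hw1, sub_self]
        rw [h3, add_zero]



/-- Mutual information `I_s(Z;B)` between the encoding `Z` and the domain index `B`,
computed from the corresponding marginals of a joint `s` on `K × X × B × Z`. -/
noncomputable def IZB {K X B Z : Type*} [Fintype K] [Fintype X] [Fintype B] [Fintype Z]
    (s : K → X → B → Z → ℝ) : ℝ :=
  ∑ β, ∑ z, (∑ k, ∑ x, s k x β z) *
    Real.log ((∑ k, ∑ x, s k x β z) /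
      ((∑ k, ∑ x, ∑ z', s k x β z') * (∑ k, ∑ x, ∑ β', s k x β' z)))

/-- Conditional mutual information `I_s(Z;K|B)`, computed from the corresponding
marginals of a joint `s` on `K × X × B × Z`. -/
noncomputable def IZKgB {K X B Z : Type*} [Fintype K] [Fintype X] [Fintype B] [Fintype Z]
    (s : K → X → B → Z → ℝ) : ℝ :=
  ∑ k, ∑ β, ∑ z, (∑ x, s k x β z) *
    Real.log (((∑ x, s k x β z) * (∑ k', ∑ x, ∑ z', s k' x β z')) /
      ((∑ k', ∑ x, s k' x β z) * (∑ x, ∑ z', s k x β z')))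

/-- **Information decomposition of the adversarial loss (Lemma 4.2, first part).**
The supremum of the discriminator log-likelihood over kernels `D` from `Z` to `K`
(positive on the support of `s_KZ`) equals `I_s(Z;B) + I_s(Z;K|B) - H(p_K)`, and
is attained at the posterior `D k|z = s_KZ k z / ∑ k', s_KZ k' z`. -/
theorem adversarial_loss_decomposition {K X B Z : Type*}
    [Fintype K] [Fintype X] [Fintype B] [Fintype Z] [DecidableEq B]
    [Nonempty K] [Nonempty X] [Nonempty B] [Nonempty Z]
    (p : K → X → ℝ) (hp0 : ∀ k x, 0 ≤ p k x) (hp1 : ∑ k, ∑ x, p k x = 1)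
    (pK : K → ℝ) (hpK : ∀ k, pK k = ∑ x, p k x)
    (f : K → B)
    (q : X → Z → ℝ) (hq0 : ∀ x z, 0 ≤ q x z) (hq1 : ∀ x, ∑ z, q x z = 1)
    (s : K → X → B → Z → ℝ)
    (hs : ∀ k x β z, s k x β z = if β = f k then p k x * q x z else 0)
    (sKZ : K → Z → ℝ) (hsKZ : ∀ k z, sKZ k z = ∑ x, ∑ β, s k x β z) :
    IsGreatest
      {v : ℝ | ∃ D : Z → K → ℝ, (∀ z k, 0 ≤ D z k) ∧ (∀ z, ∑ k, D z k = 1) ∧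
        (∀ k z, 0 < sKZ k z → 0 < D z k) ∧
        v = ∑ k, ∑ z, sKZ k z * Real.log (D z k)}
      (IZB s + IZKgB s - (-∑ k, pK k * Real.log (pK k)))
    ∧ ∀ D : Z → K → ℝ, (∀ z k, 0 ≤ D z k) → (∀ z, ∑ k, D z k = 1) →
        (∀ z k, 0 < ∑ k', sKZ k' z → D z k = sKZ k z / ∑ k', sKZ k' z) →
        ∑ k, ∑ z, sKZ k z * Real.log (D z k)
          = IZB s + IZKgB s - (-∑ k, pK k * Real.log (pK k)) := by

  classical
  -- basic facts about sKZ
  have hw : ∀ k z, sKZ k z = ∑ x, p k x * q x z := by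
    intro k z
    rw [hsKZ]
    refine Finset.sum_congr rfl fun x _ => ?_
    simp [hs]
  have hw0 : ∀ k z, 0 ≤ sKZ k z := by
    intro k z
    rw [hw]
    exact Finset.sum_nonneg fun x _ => mul_nonneg (hp0 k x) (hq0 x z)
  have hrow : ∀ k, ∑ z, sKZ k z = pK k := by
    intro k
    rw [hpK]
    simp only [hw]
    rw [Finset.sum_comm]
    refine Finset.sum_congr rfl fun x _ => ?_
    rw [← Finset.mul_sum, hq1, mul_one]
  have hpK0 : ∀ k, 0 ≤ pK k := by
    intro k; rw [← hrow]; exact Finset.sum_nonneg fun z _ => hw0 k z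
  have htot : ∑ k, ∑ z, sKZ k z = 1 := by
    rw [Finset.sum_congr rfl fun k _ => hrow k]
    rw [Finset.sum_congr rfl fun k _ => hpK k, hp1]
  -- marginal computations
  have m1 : ∀ k β z, ∑ x, s k x β z = if β = f k then sKZ k z else 0 := by
    intro k β z
    by_cases h : β = f k
    · simp only [hs, h, if_pos rfl, if_true]
      exact (hw k z).symm
    · simp [hs, h]
  have m2 : ∀ k β, ∑ x, ∑ z', s k x β z' = if β = f k then pK k else 0 := by
    intro k β
    rw [Finset.sum_comm]
    rw [Finset.sum_congr rfl fun z' _ => m1 k β z']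
    by_cases h : β = f k <;> simp [h, hrow k]
  have m3 : ∀ k z, ∑ x, ∑ β', s k x β' z = sKZ k z := fun k z => (hsKZ k z).symm
  have d1 : ∀ β z, ∑ k, ∑ x, s k x β z = ∑ k, if β = f k then sKZ k z else 0 :=
    fun β z => Finset.sum_congr rfl fun k _ => m1 k β z
  have d2 : ∀ β, ∑ k, ∑ x, ∑ z', s k x β z' = ∑ k, if β = f k then pK k else 0 :=
    fun β => Finset.sum_congr rfl fun k _ => m2 k β
  have d3 : ∀ z, ∑ k, ∑ x, ∑ β', s k x β' z = ∑ k, sKZ k z :=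
    fun z => Finset.sum_congr rfl fun k _ => m3 k z
  -- positivity on the support
  have hTpos : ∀ k z, 0 < sKZ k z → 0 < ∑ k', if f k = f k' then sKZ k' z else 0 := by
    intro k z h
    have h1 : sKZ k z ≤ ∑ k', if f k = f k' then sKZ k' z else 0 := by
      have := Finset.single_le_sum
        (f := fun k' => if f k = f k' then sKZ k' z else 0)
        (fun k' _ => by split_ifs; exacts [hw0 k' z, le_rfl]) (Finset.mem_univ k)
      simpa using this
    linarith
  have hSBpos : ∀ k, 0 < pK k → 0 < ∑ k', if f k = f k' then pK k' else 0 := by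
    intro k h
    have h1 : pK k ≤ ∑ k', if f k = f k' then pK k' else 0 := by
      have := Finset.single_le_sum
        (f := fun k' => if f k = f k' then pK k' else 0)
        (fun k' _ => by split_ifs; exacts [hpK0 k', le_rfl]) (Finset.mem_univ k)
      simpa using this
    linarith
  have hpKge : ∀ k z, sKZ k z ≤ pK k := by
    intro k z
    rw [← hrow k]
    exact Finset.single_le_sum (fun z' _ => hw0 k z') (Finset.mem_univ z)
  have hsZge : ∀ k z, sKZ k z ≤ ∑ k', sKZ k' z :=
    fun k z => Finset.single_le_sum (fun k' _ => hw0 k' z) (Finset.mem_univ k)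
  -- reduce IZB to a (k, z)-sum
  have e1 : IZB s = ∑ k, ∑ z, sKZ k z *
      Real.log ((∑ k', if f k = f k' then sKZ k' z else 0) /
        ((∑ k', if f k = f k' then pK k' else 0) * (∑ k', sKZ k' z))) := by
    rw [IZB]
    simp only [d1, d2, d3]
    rw [Finset.sum_congr rfl fun β _ => Finset.sum_congr rfl fun z _ => Finset.sum_mul ..]
    rw [Finset.sum_comm]
    rw [Finset.sum_congr rfl fun z _ => Finset.sum_comm]
    rw [Finset.sum_comm]
    refine Finset.sum_congr rfl fun k _ => Finset.sum_congr rfl fun z _ => ?_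
    simp [ite_mul, zero_mul, Finset.sum_ite_eq']
  -- reduce IZKgB to a (k, z)-sum
  have e2 : IZKgB s = ∑ k, ∑ z, sKZ k z *
      Real.log ((sKZ k z * (∑ k', if f k = f k' then pK k' else 0)) /
        ((∑ k', if f k = f k' then sKZ k' z else 0) * pK k)) := by
    rw [IZKgB]
    simp only [m1, m2, d1, d2]
    refine Finset.sum_congr rfl fun k _ => ?_
    rw [Finset.sum_comm]
    refine Finset.sum_congr rfl fun z _ => ?_
    simp [ite_mul, zero_mul, Finset.sum_ite_eq']
  -- reduce the entropy (as a double sum over (k, z))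
  have e3 : ∑ k, pK k * Real.log (pK k) = ∑ k, ∑ z, sKZ k z * Real.log (pK k) := by
    refine Finset.sum_congr rfl fun k _ => ?_
    rw [← Finset.sum_mul, hrow k]
  -- the key identity
  have keyA : IZB s + IZKgB s - (-∑ k, pK k * Real.log (pK k))
      = ∑ k, ∑ z, sKZ k z * Real.log (sKZ k z / ∑ k', sKZ k' z) := by
    rw [e1, e2, sub_neg_eq_add, e3]
    simp only [← Finset.sum_add_distrib]
    refine Finset.sum_congr rfl fun k _ => Finset.sum_congr rfl fun z _ => ?_
    rcases (hw0 k z).lt_or_eq with h | h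
    · have hT := hTpos k z h
      have hpKk : 0 < pK k := lt_of_lt_of_le h (hpKge k z)
      have hSB := hSBpos k hpKk
      have hsZ : 0 < ∑ k', sKZ k' z := lt_of_lt_of_le h (hsZge k z)
      rw [Real.log_div hT.ne' (mul_pos hSB hsZ).ne',
        Real.log_div (mul_pos h hSB).ne' (mul_pos hT hpKk).ne',
        Real.log_div h.ne' hsZ.ne',
        Real.log_mul hSB.ne' hsZ.ne',
        Real.log_mul h.ne' hSB.ne',
        Real.log_mul hT.ne' hpKk.ne']
      ring
    · rw [← h]; ring
  refine ⟨⟨?_, ?_⟩, ?_⟩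
  · -- membership: the posterior attains the value
    refine ⟨fun z k => if 0 < ∑ k', sKZ k' z then sKZ k z / ∑ k', sKZ k' z
      else (Fintype.card K : ℝ)⁻¹, ?_, ?_, ?_, ?_⟩
    · intro z k
      dsimp only
      split_ifs with h
      · exact div_nonneg (hw0 k z) h.le
      · positivity
    · intro z
      dsimp only
      by_cases h : 0 < ∑ k', sKZ k' z
      · simp only [if_pos h]
        rw [← Finset.sum_div, div_self h.ne']
      · simp only [if_neg h]
        rw [Finset.sum_const, Finset.card_univ, nsmul_eq_mul]
        rw [mul_inv_cancel₀ (Nat.cast_ne_zero.mpr Fintype.card_ne_zero)]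
    · intro k z hkz
      have h : 0 < ∑ k', sKZ k' z := lt_of_lt_of_le hkz (hsZge k z)
      dsimp only
      rw [if_pos h]
      exact div_pos hkz h
    · rw [keyA]
      refine Finset.sum_congr rfl fun k _ => Finset.sum_congr rfl fun z _ => ?_
      dsimp only
      rcases (hw0 k z).lt_or_eq with h | h
      · rw [if_pos (lt_of_lt_of_le h (hsZge k z))]
      · rw [← h, zero_mul, zero_mul]
  · -- upper bound
    rintro v ⟨D, hD0, hD1, hDpos, rfl⟩
    rw [keyA]
    exact gibbs_ineq sKZ hw0 htot D hD0 hD1 hDpos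
  · -- second part: any kernel matching the posterior on the support attains the value
    intro D hD0 hD1 hDpost
    rw [keyA]
    refine Finset.sum_congr rfl fun k _ => Finset.sum_congr rfl fun z _ => ?_
    rcases (hw0 k z).lt_or_eq with h | h
    · have hsZ : 0 < ∑ k', sKZ k' z := lt_of_lt_of_le h (hsZge k z)
      rw [hDpost z k hsZ]
    · rw [← h, zero_mul, zero_mul]
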